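/- If a finite multiset S of reals has odd cardinality, then the function c ↦ Σ_{y∈S}|c−y| has a unique minimizer over ℝ (namely the median of S). -/

import Mathlib

lemma key_med : ∀ (k : ℕ) (l : List ℝ), l.Pairwise (· ≤ ·) → l.length = 2 * k + 1 →
    ∀ m : ℝ, l[k]? = some m → ∀ c : ℝ,
    (l.map (fun y => |m - y|)).sum + |c - m| ≤ (l.map (fun y => |c - y|)).sum := by
  intro k
  induction k with
  | zero =>
    intro l hs hl m hm c
    match l, hl with
    | [x], _ =>
      simp at hm
      subst hm
      simp
  | succ k ih =>
    intro l hs hl m hm c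
    match l, hl with
    | a :: t, hl =>
      have ht : t ≠ [] := by
        intro h; simp [h] at hl
      have htd : t.dropLast ++ [t.getLast ht] = t := List.dropLast_append_getLast ht
      set b := t.getLast ht with hb
      set t' := t.dropLast with ht'
      have hlen : t'.length = 2 * k + 1 := by
        have := congrArg List.length htd
        simp at this
        simp at hl
        omega
      have hts : t.Pairwise (· ≤ ·) := hs.of_cons
      have ht's : t'.Pairwise (· ≤ ·) := by
        rw [← htd, List.pairwise_append] at hts
        exact hts.1
      have hkb : k < t'.length := by omega
      have hm' : t'[k]? = some m := by
        rw [← htd] at hm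
        rw [List.getElem?_cons_succ] at hm
        rwa [List.getElem?_append_left hkb] at hm
      have hmem : m ∈ t' := by
        have : t'[k] = m := by
          have := hm'; rwa [List.getElem?_eq_getElem hkb, Option.some_inj] at this
        exact this ▸ List.getElem_mem hkb
      have ham : a ≤ m := by
        have := hs
        rw [List.pairwise_cons] at this
        exact this.1 m (by rw [← htd]; exact List.mem_append_left _ hmem)
      have hmb : m ≤ b := by
        have := hts
        rw [← htd, List.pairwise_append] at this
        exact this.2.2 m hmem b (List.mem_singleton_self b)
      have hIH := ih t' ht's hlen m hm' c
      have e1 : ((a :: t).map (fun y => |c - y|)).sum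
          = |c - a| + ((t'.map (fun y => |c - y|)).sum + |c - b|) := by
        rw [← htd]; simp
      have e2 : ((a :: t).map (fun y => |m - y|)).sum
          = |m - a| + ((t'.map (fun y => |m - y|)).sum + |m - b|) := by
        rw [← htd]; simp
      rw [e1, e2]
      have h1 : |m - a| = m - a := abs_of_nonneg (by linarith)
      have h2 : |m - b| = b - m := by rw [abs_sub_comm]; exact abs_of_nonneg (by linarith)
      have h3 : c - a ≤ |c - a| := le_abs_self _
      have h4 : b - c ≤ |c - b| := by rw [abs_sub_comm]; exact le_abs_self _
      linarith

theorem stmt_4 (S : Multiset ℝ) (hodd : Odd S.card) :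
    ∃! a : ℝ, ∀ c : ℝ,
      (S.map (fun y => |a - y|)).sum ≤ (S.map (fun y => |c - y|)).sum := by
  obtain ⟨k, hk⟩ := hodd
  set l := S.sort (· ≤ ·) with hl
  have hls : l.Pairwise (· ≤ ·) := S.pairwise_sort _
  have hlen : l.length = 2 * k + 1 := by
    rw [hl, Multiset.length_sort, hk]
  have hkl : k < l.length := by omega
  set m := l[k] with hmdef
  have hm : l[k]? = some m := List.getElem?_eq_getElem hkl
  have hsum : ∀ f : ℝ → ℝ, (S.map f).sum = (l.map f).sum := by
    intro f
    conv_lhs => rw [← Multiset.sort_eq S (· ≤ ·)]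
    rw [Multiset.map_coe, Multiset.sum_coe, hl]
  refine ⟨m, fun c => ?_, fun a ha => ?_⟩
  · rw [hsum, hsum]
    have := key_med k l hls hlen m hm c
    have : |c - m| ≥ 0 := abs_nonneg _
    linarith [key_med k l hls hlen m hm c]
  · have h1 := ha m
    rw [hsum, hsum] at h1
    have h2 := key_med k l hls hlen m hm a
    have : |a - m| ≤ 0 := by linarith
    have : |a - m| = 0 := le_antisymm this (abs_nonneg _)
    have := abs_eq_zero.mp this
    linarith
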